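/- For all integers m ≥ 1 and n ≥ 0, and every complex z with Re z ≥ 0 and 0 < |z| < 1, set R = S_{m+1}(z) − z^{−(m+1)} − Σ_{k=0}^{n} (−1)^k · C(k+m, m) · ζ(k+m+1) · z^k, where C(k+m,m) is a binomial coefficient and ζ is the Riemann zeta function. Then |Re R| ≤ C(n+m+1, m) · ζ(n+m+2) · |z|^{n+1} and |Im R| ≤ C(n+m+1, m) · ζ(n+m+2) · |z|^{n+1}. (This is the Laurent expansion of the polygamma function ψ_m at 0 with explicit remainder bounds.) -/

import Mathlib

set_option maxRecDepth 4000
set_option maxHeartbeats 1000000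



open Complex Finset

/-- `S j z = ∑_{k=0}^∞ 1/(z+k)^j`, so that `ψ_m(z) = (−1)^{m+1} m! S_{m+1}(z)`. -/
noncomputable def S (j : ℕ) (z : ℂ) : ℂ := ∑' k : ℕ, 1 / (z + k) ^ j

section LaurentPolygammaAux

noncomputable def Ppoly (m n : ℕ) (w : ℂ) : ℂ :=
  ∑ j ∈ Finset.range (n + 1), (-1 : ℂ) ^ j * (Nat.choose (j + m) m) * w ^ j

lemma one_le_abs_one_add {w : ℂ} (hw : 0 ≤ w.re) : 1 ≤ ‖1 + w‖ := by
  calc (1:ℝ) ≤ (1 + w).re := by simp [Complex.add_re]; linarith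
  _ ≤ ‖1 + w‖ := Complex.re_le_norm _

lemma mul_Ppoly_succ (m n : ℕ) (w : ℂ) :
    (1 + w) * Ppoly (m + 1) n w
      = Ppoly m n w + (-1 : ℂ) ^ n * (Nat.choose (n + m + 1) (m + 1)) * w ^ (n + 1) := by
  induction n with
  | zero => simp [Ppoly]
  | succ n ih =>
      have hp : (((n + m + 1 + 1).choose (m + 1) : ℂ))
          = ((n + m + 1).choose m : ℂ) + ((n + m + 1).choose (m + 1) : ℂ) := by
        exact_mod_cast Nat.choose_succ_succ (n + m + 1) m
      simp only [Ppoly, Finset.sum_range_succ] at *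
      have h1 : (n + 1 + m = n + m + 1) := by ring
      have h2 : (n + 1 + (m + 1) = n + m + 1 + 1) := by ring
      have h3 : (n + (m + 1) = n + m + 1) := by ring
      simp only [h1, h2, h3] at ih ⊢
      linear_combination ih + (-1:ℂ)^(n+1) * w^(n+1) * hp

lemma key_bound (m n : ℕ) {w : ℂ} (hw : 0 ≤ w.re) :
    ‖((1 + w) ^ (m + 1))⁻¹ - Ppoly m n w‖
      ≤ (Nat.choose (n + m + 1) m) * ‖w‖ ^ (n + 1) := by
  have h1 := one_le_abs_one_add hw
  have hne : (1 + w) ≠ 0 := by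
    intro h; rw [h] at h1; simp at h1; linarith
  induction m with
  | zero =>
      have hgeo : (1 + w) * Ppoly 0 n w = 1 - (-w) ^ (n + 1) := by
        have hg := geom_sum_mul (-w) (n + 1)
        have hs : Ppoly 0 n w = ∑ j ∈ Finset.range (n + 1), (-w) ^ j := by
          apply Finset.sum_congr rfl
          intro j _
          rw [show (-w) = (-1 : ℂ) * w by ring, mul_pow]
          simp
        rw [hs]
        linear_combination -hg
      have hid : (1 + w) * (((1 + w) ^ (0 + 1))⁻¹ - Ppoly 0 n w) = (-w) ^ (n + 1) := by
        rw [mul_sub, pow_one, mul_inv_cancel₀ hne, hgeo]; ring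
      calc ‖((1 + w) ^ (0 + 1))⁻¹ - Ppoly 0 n w‖
          ≤ ‖(1 + w)‖ * ‖((1 + w) ^ (0 + 1))⁻¹ - Ppoly 0 n w‖ :=
            le_mul_of_one_le_left (norm_nonneg _) h1
        _ = ‖(1 + w) * (((1 + w) ^ (0 + 1))⁻¹ - Ppoly 0 n w)‖ := (norm_mul _ _).symm
        _ = ‖w‖ ^ (n + 1) := by rw [hid]; simp
        _ ≤ (Nat.choose (n + 0 + 1) 0) * ‖w‖ ^ (n + 1) := by simp
  | succ m ih =>
      have hid : (1 + w) * (((1 + w) ^ (m + 1 + 1))⁻¹ - Ppoly (m + 1) n w)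
          = (((1 + w) ^ (m + 1))⁻¹ - Ppoly m n w)
            - (-1 : ℂ) ^ n * ((n + m + 1).choose (m + 1)) * w ^ (n + 1) := by
        rw [mul_sub, mul_Ppoly_succ]
        have hq : (1 + w) * ((1 + w) ^ (m + 1 + 1))⁻¹ = ((1 + w) ^ (m + 1))⁻¹ := by
          rw [pow_succ]
          field_simp
        rw [hq]; ring
      have hp : (((n + (m + 1) + 1).choose (m + 1) : ℝ))
          = ((n + m + 1).choose m : ℝ) + ((n + m + 1).choose (m + 1) : ℝ) := by
        have : n + (m + 1) + 1 = (n + m + 1) + 1 := by ring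
        rw [this]
        exact_mod_cast Nat.choose_succ_succ (n + m + 1) m
      calc ‖((1 + w) ^ (m + 1 + 1))⁻¹ - Ppoly (m + 1) n w‖
          ≤ ‖(1 + w)‖ * ‖((1 + w) ^ (m + 1 + 1))⁻¹ - Ppoly (m + 1) n w‖ :=
            le_mul_of_one_le_left (norm_nonneg _) h1
        _ = ‖(1 + w) * (((1 + w) ^ (m + 1 + 1))⁻¹ - Ppoly (m + 1) n w)‖ := (norm_mul _ _).symm
        _ = ‖(((1 + w) ^ (m + 1))⁻¹ - Ppoly m n w)
            - (-1 : ℂ) ^ n * ((n + m + 1).choose (m + 1)) * w ^ (n + 1)‖ := by rw [hid]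
        _ ≤ ‖((1 + w) ^ (m + 1))⁻¹ - Ppoly m n w‖
            + ‖(-1 : ℂ) ^ n * ((n + m + 1).choose (m + 1)) * w ^ (n + 1)‖ := norm_sub_le _ _
        _ ≤ (Nat.choose (n + m + 1) m) * ‖w‖ ^ (n + 1)
            + (Nat.choose (n + m + 1) (m + 1)) * ‖w‖ ^ (n + 1) := by
              gcongr
              · simp [map_mul, map_pow, Complex.norm_natCast]
        _ ≤ (Nat.choose (n + (m + 1) + 1) (m + 1)) * ‖w‖ ^ (n + 1) := by
              rw [hp]; ring_nf; rfl

lemma summable_aux (p : ℕ) (hp : 2 ≤ p) :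
    Summable (fun k : ℕ => 1 / ((k : ℝ) + 1) ^ p) := by
  have h := Real.summable_one_div_nat_pow.mpr (by omega : 1 < p)
  have h2 := (summable_nat_add_iff 1).mpr h
  exact h2.congr fun k => by push_cast; ring

lemma summable_auxC (p : ℕ) (hp : 2 ≤ p) :
    Summable (fun k : ℕ => 1 / ((k : ℂ) + 1) ^ p) := by
  apply Summable.of_norm
  refine (summable_aux p hp).congr fun k => ?_
  rw [norm_div, norm_pow, norm_one]
  congr 2
  rw [show ((k : ℂ) + 1) = ((k + 1 : ℕ) : ℂ) by push_cast; ring, Complex.norm_natCast]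
  push_cast; ring

lemma zetaC (N : ℕ) (hN : 2 ≤ N) :
    riemannZeta (N : ℂ) = ∑' k : ℕ, 1 / ((k : ℂ) + 1) ^ N := by
  rw [zeta_eq_tsum_one_div_nat_add_one_cpow (by simp; exact_mod_cast hN.trans_lt' one_lt_two)]
  · exact tsum_congr fun k => by rw [cpow_natCast]
lemma zeta_nat_ofReal (N : ℕ) (hN : 2 ≤ N) :
    riemannZeta (N : ℂ) = ((∑' k : ℕ, 1 / ((k : ℝ) + 1) ^ N : ℝ) : ℂ) := by
  rw [zetaC N hN, Complex.ofReal_tsum]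
  exact tsum_congr fun k => by push_cast; ring

end LaurentPolygammaAux

/-- Laurent expansion of the polygamma function at `0` with explicit remainder bounds:
for `m ≥ 1`, `n ≥ 0`, `Re z ≥ 0` and `0 < |z| < 1`, setting
`R = S_{m+1}(z) − z^{−(m+1)} − Σ_{k=0}^{n} (−1)^k C(k+m,m) ζ(k+m+1) z^k`,
both `|Re R|` and `|Im R|` are at most `C(n+m+1,m)·ζ(n+m+2)·|z|^{n+1}`. -/
theorem laurent_polygamma_remainder (m n : ℕ) (hm : 1 ≤ m) (z : ℂ) (hre : 0 ≤ z.re)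
    (hz0 : 0 < ‖z‖) (hz1 : ‖z‖ < 1) :
    |(S (m + 1) z - z ^ (-((m : ℤ) + 1))
        - ∑ k ∈ Finset.range (n + 1),
            (-1 : ℂ) ^ k * (Nat.choose (k + m) m) * riemannZeta ((k + m + 1 : ℕ) : ℂ) * z ^ k).re|
      ≤ (Nat.choose (n + m + 1) m) * (riemannZeta ((n + m + 2 : ℕ) : ℂ)).re
          * ‖z‖ ^ (n + 1) ∧
    |(S (m + 1) z - z ^ (-((m : ℤ) + 1))
        - ∑ k ∈ Finset.range (n + 1),
            (-1 : ℂ) ^ k * (Nat.choose (k + m) m) * riemannZeta ((k + m + 1 : ℕ) : ℂ) * z ^ k).im|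
      ≤ (Nat.choose (n + m + 1) m) * (riemannZeta ((n + m + 2 : ℕ) : ℂ)).re
          * ‖z‖ ^ (n + 1) := by
  set F : ℕ → ℂ := fun k => 1 / (z + ((k : ℂ) + 1)) ^ (m + 1) with hF
  set G : ℕ → ℂ := fun k => ∑ j ∈ Finset.range (n + 1),
      (-1 : ℂ) ^ j * ((j + m).choose m : ℂ) * z ^ j * (1 / ((k : ℂ) + 1) ^ (j + m + 1)) with hG
  -- basic facts per k
  have hcne : ∀ k : ℕ, ((k : ℂ) + 1) ≠ 0 := fun k => Nat.cast_add_one_ne_zero k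
  have habs_c : ∀ k : ℕ, ‖(k : ℂ) + 1‖ = (k : ℝ) + 1 := fun k => by
    rw [show ((k : ℂ) + 1) = ((k + 1 : ℕ) : ℂ) by push_cast; ring, Complex.norm_natCast]
    push_cast; ring
  have hk1 : ∀ k : ℕ, ((k : ℝ) + 1) ≤ ‖z + ((k : ℂ) + 1)‖ := fun k => by
    have : ((k : ℝ) + 1) ≤ (z + ((k : ℂ) + 1)).re := by
      simp [Complex.add_re]; linarith
    exact this.trans (Complex.re_le_norm _)
  have hkpos : ∀ k : ℕ, (0 : ℝ) < (k : ℝ) + 1 := fun k => by positivity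
  have hFbound : ∀ k : ℕ, ‖F k‖ ≤ 1 / ((k : ℝ) + 1) ^ (m + 1) := fun k => by
    rw [hF]
    simp only [norm_div, norm_one, norm_pow]
    apply one_div_le_one_div_of_le (by positivity)
    exact pow_le_pow_left₀ (by positivity) (hk1 k) _
  have hFsum : Summable F :=
    Summable.of_norm_bounded (summable_aux (m + 1) (by omega)) hFbound
  have hGsum : Summable G := by
    apply summable_sum
    intro j _
    exact ((summable_auxC (j + m + 1) (by omega)).mul_left _)
  -- per-term identity and bound
  have hDk : ∀ k : ℕ, F k - G k
      = (((k : ℂ) + 1) ^ (m + 1))⁻¹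
        * (((1 + z / ((k : ℂ) + 1)) ^ (m + 1))⁻¹ - Ppoly m n (z / ((k : ℂ) + 1))) := by
    intro k
    have hc := hcne k
    have hc2 : ((1 : ℂ) + (k : ℂ)) ≠ 0 := by rw [add_comm]; exact hc
    simp only [hF, hG, Ppoly, mul_sub, Finset.mul_sum]
    congr 1
    · rw [show z + ((k : ℂ) + 1) = ((k : ℂ) + 1) * (1 + z / ((k : ℂ) + 1)) by
        rw [mul_add, mul_one, mul_div_cancel₀ _ hc]; ring, mul_pow, one_div, mul_inv]
    · apply Finset.sum_congr rfl
      intro j _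
      have hpw : ((k : ℂ) + 1) ^ (j + m + 1) = ((k : ℂ) + 1) ^ (m + 1) * ((k : ℂ) + 1) ^ j := by
        rw [← pow_add]; congr 1; ring
      rw [hpw, div_pow]
      simp only [one_div, div_eq_mul_inv, mul_inv]
      ring
  have hwre : ∀ k : ℕ, 0 ≤ (z / ((k : ℂ) + 1)).re := fun k => by
    rw [show ((k : ℂ) + 1) = (((k : ℝ) + 1 : ℝ) : ℂ) by push_cast; ring,
      Complex.div_ofReal_re]
    positivity
  have hDbound : ∀ k : ℕ, ‖F k - G k‖
      ≤ ((n + m + 1).choose m : ℝ) * ‖z‖ ^ (n + 1) * (1 / ((k : ℝ) + 1) ^ (n + m + 2)) := by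
    intro k
    rw [hDk k, norm_mul]
    have h1 : ‖(((k : ℂ) + 1) ^ (m + 1))⁻¹‖ = (((k : ℝ) + 1) ^ (m + 1))⁻¹ := by
      rw [norm_inv, norm_pow, habs_c]
    have h2 := key_bound m n (hwre k)
    have h3 : ‖z / ((k : ℂ) + 1)‖ = ‖z‖ / ((k : ℝ) + 1) := by
      rw [norm_div, habs_c]
    rw [h3] at h2
    rw [h1]
    calc (((k : ℝ) + 1) ^ (m + 1))⁻¹ * ‖((1 + z / ((k : ℂ) + 1)) ^ (m + 1))⁻¹ - Ppoly m n (z / ((k : ℂ) + 1))‖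
        ≤ (((k : ℝ) + 1) ^ (m + 1))⁻¹ * (((n + m + 1).choose m : ℝ) * (‖z‖ / ((k : ℝ) + 1)) ^ (n + 1)) :=
          mul_le_mul_of_nonneg_left h2 (by positivity)
      _ = ((n + m + 1).choose m : ℝ) * ‖z‖ ^ (n + 1) * (1 / ((k : ℝ) + 1) ^ (n + m + 2)) := by
          have hq : ((k : ℝ) + 1) ^ (n + m + 2) = ((k : ℝ) + 1) ^ (m + 1) * ((k : ℝ) + 1) ^ (n + 1) := by
            rw [← pow_add]; congr 1; ring
          rw [div_pow, hq]
          simp only [one_div, div_eq_mul_inv, mul_inv]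
          ring
  -- rewrite S
  have hS : S (m + 1) z = (z ^ (m + 1))⁻¹ + ∑' k : ℕ, F k := by
    rw [S]
    have hfull : Summable (fun k : ℕ => 1 / (z + (k : ℂ)) ^ (m + 1)) := by
      apply (summable_nat_add_iff 1).mp
      exact hFsum.congr fun k => by simp only [hF]; push_cast; ring_nf
    rw [Summable.tsum_eq_zero_add hfull]
    congr 1
    · simp
    · exact tsum_congr fun k => by simp only [hF]; push_cast; ring_nf
  -- rewrite zeta sum
  have hzsum : ∑ j ∈ Finset.range (n + 1),
        (-1 : ℂ) ^ j * ((j + m).choose m : ℂ) * riemannZeta ((j + m + 1 : ℕ) : ℂ) * z ^ j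
      = ∑' k : ℕ, G k := by
    rw [hG, Summable.tsum_finsetSum (fun j _ => ((summable_auxC (j + m + 1) (by omega)).mul_left _))]
    apply Finset.sum_congr rfl
    intro j _
    rw [zetaC (j + m + 1) (by omega)]
    rw [show (-1 : ℂ) ^ j * ((j + m).choose m : ℂ) * (∑' k : ℕ, 1 / ((k : ℂ) + 1) ^ (j + m + 1)) * z ^ j
        = ((-1 : ℂ) ^ j * ((j + m).choose m : ℂ) * z ^ j) * ∑' k : ℕ, 1 / ((k : ℂ) + 1) ^ (j + m + 1) from by ring]
    rw [← tsum_mul_left]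
  -- the remainder equals ∑' (F - G)
  have hzpow : z ^ (-((m : ℤ) + 1)) = (z ^ (m + 1))⁻¹ := by
    rw [show (-((m : ℤ) + 1)) = -((m + 1 : ℕ) : ℤ) by push_cast; ring, zpow_neg, zpow_natCast]
  have hR : S (m + 1) z - z ^ (-((m : ℤ) + 1))
        - ∑ j ∈ Finset.range (n + 1),
            (-1 : ℂ) ^ j * ((j + m).choose m : ℂ) * riemannZeta ((j + m + 1 : ℕ) : ℂ) * z ^ j
      = ∑' k : ℕ, (F k - G k) := by
    rw [hS, hzpow, hzsum, Summable.tsum_sub hFsum hGsum]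
    ring
  -- norm bound
  have hmaj : Summable (fun k : ℕ => ((n + m + 1).choose m : ℝ) * ‖z‖ ^ (n + 1) * (1 / ((k : ℝ) + 1) ^ (n + m + 2))) :=
    (summable_aux (n + m + 2) (by omega)).mul_left _
  have hnormsum : Summable (fun k : ℕ => ‖F k - G k‖) :=
    Summable.of_nonneg_of_le (fun k => norm_nonneg _) hDbound hmaj
  have hnorm : ‖∑' k : ℕ, (F k - G k)‖
      ≤ ((n + m + 1).choose m : ℝ) * ‖z‖ ^ (n + 1) * ∑' k : ℕ, (1 / ((k : ℝ) + 1) ^ (n + m + 2)) := by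
    calc ‖∑' k : ℕ, (F k - G k)‖ ≤ ∑' k : ℕ, ‖F k - G k‖ := norm_tsum_le_tsum_norm hnormsum
      _ ≤ ∑' k : ℕ, ((n + m + 1).choose m : ℝ) * ‖z‖ ^ (n + 1) * (1 / ((k : ℝ) + 1) ^ (n + m + 2)) :=
          Summable.tsum_le_tsum hDbound hnormsum hmaj
      _ = ((n + m + 1).choose m : ℝ) * ‖z‖ ^ (n + 1) * ∑' k : ℕ, (1 / ((k : ℝ) + 1) ^ (n + m + 2)) :=
          tsum_mul_left
  have hzre : (riemannZeta ((n + m + 2 : ℕ) : ℂ)).re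
      = ∑' k : ℕ, 1 / ((k : ℝ) + 1) ^ (n + m + 2) := by
    rw [zeta_nat_ofReal (n + m + 2) (by omega), Complex.ofReal_re]
  rw [hR]
  have hfinal : ‖∑' k : ℕ, (F k - G k)‖
      ≤ (Nat.choose (n + m + 1) m) * (riemannZeta ((n + m + 2 : ℕ) : ℂ)).re
        * ‖z‖ ^ (n + 1) := by
    rw [hzre]
    calc ‖∑' k : ℕ, (F k - G k)‖
        ≤ ((n + m + 1).choose m : ℝ) * ‖z‖ ^ (n + 1) * ∑' k : ℕ, (1 / ((k : ℝ) + 1) ^ (n + m + 2)) := hnorm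
      _ = ((n + m + 1).choose m : ℝ) * (∑' k : ℕ, 1 / ((k : ℝ) + 1) ^ (n + m + 2))
          * ‖z‖ ^ (n + 1) := by ring
  constructor
  · exact (Complex.abs_re_le_norm _).trans hfinal
  · exact (Complex.abs_im_le_norm _).trans hfinal
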